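/- Let Q be an abelian group and let q ∈ Q be a non-zero element such that every non-trivial subgroup of Q contains q. Then Q is either a cyclic group of prime-power order or is isomorphic, for some prime p, to the Prüfer p-group ℤ[1/p]/ℤ of all p-power-order roots of unity. -/

import Mathlib

/-- The Prüfer `p`-group `ℤ[1/p]/ℤ`, realised as the subgroup of the circle group `ℝ/ℤ`
consisting of all elements killed by some power of `p` (equivalently, all `p^k`-th roots
of unity for all `k ≥ 0`). -/
noncomputable def pruferGroup (p : ℕ) : AddSubgroup (AddCircle (1 : ℝ)) where
  carrier := {x | ∃ k : ℕ, (p ^ k : ℕ) • x = 0}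
  zero_mem' := ⟨0, smul_zero _⟩
  add_mem' := by
    rintro a b ⟨k, hk⟩ ⟨l, hl⟩
    refine ⟨k + l, ?_⟩
    have h1 : (p ^ (k + l) : ℕ) • a = 0 := by
      rw [add_comm, pow_add, mul_smul, hk, smul_zero]
    have h2 : (p ^ (k + l) : ℕ) • b = 0 := by
      rw [pow_add, mul_smul, hl, smul_zero]
    rw [smul_add, h1, h2, add_zero]
  neg_mem' := by
    rintro a ⟨k, hk⟩
    exact ⟨k, by rw [smul_neg, hk, neg_zero]⟩

/-! ### Auxiliary lemmas about the circle -/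

private noncomputable def pXi (p : ℕ) (k : ℕ) : AddCircle (1 : ℝ) :=
  ((((p : ℝ) ^ k)⁻¹ : ℝ) : AddCircle (1:ℝ))

private lemma circ_tor {p : ℕ} (hp : 0 < p) (k : ℕ) : (p ^ k : ℕ) • pXi p k = 0 := by
  rw [pXi, ← AddCircle.coe_nsmul]
  have h : ((p ^ k : ℕ) • ((p:ℝ)^k)⁻¹ : ℝ) = 1 := by
    have : ((p:ℝ)^k) ≠ 0 := by positivity
    rw [nsmul_eq_mul]
    push_cast
    field_simp
  rw [h]
  exact AddCircle.coe_period 1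

private lemma circ_dvd {p : ℕ} (hp : 0 < p) (k : ℕ) (m : ℤ)
    (h : m • pXi p k = 0) : ((p:ℤ) ^ k) ∣ m := by
  rw [pXi, ← AddCircle.coe_zsmul, AddCircle.coe_eq_zero_iff] at h
  obtain ⟨n, hn⟩ := h
  refine ⟨n, ?_⟩
  have hpk : ((p:ℝ))^k ≠ 0 := by positivity
  have h2 : (m : ℝ) = ((p:ℝ))^k * n := by
    rw [zsmul_eq_mul, zsmul_eq_mul, mul_one] at hn
    field_simp at hn
    linarith
  exact_mod_cast h2

private lemma circ_compat {p : ℕ} (hp : 0 < p) (k : ℕ) :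
    p • pXi p (k + 1) = pXi p k := by
  rw [pXi, pXi, ← AddCircle.coe_nsmul]
  congr 1
  have : ((p:ℝ)) ≠ 0 := by positivity
  rw [nsmul_eq_mul, pow_succ]
  field_simp

private lemma circ_surj {p : ℕ} (hp : 0 < p) (k : ℕ) (y : AddCircle (1:ℝ))
    (h : (p ^ k : ℕ) • y = 0) : ∃ m : ℤ, m • pXi p k = y := by
  induction y using QuotientAddGroup.induction_on with
  | H r =>
  rw [← AddCircle.coe_nsmul, AddCircle.coe_eq_zero_iff] at h
  obtain ⟨n, hn⟩ := h
  refine ⟨n, ?_⟩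
  rw [pXi, ← AddCircle.coe_zsmul]
  congr 1
  have hpk : ((p:ℝ))^k ≠ 0 := by positivity
  rw [zsmul_eq_mul]
  rw [zsmul_eq_mul, mul_one, nsmul_eq_mul] at hn
  push_cast at hn ⊢
  field_simp
  linarith

/-! ### Auxiliary lemmas about groups with a minimal element -/

section aux
variable {Q : Type*} [AddCommGroup Q] {q : Q}

open AddSubgroup

private lemma aux_mem (hmin : ∀ S : AddSubgroup Q, S ≠ ⊥ → q ∈ S)
    {x : Q} (hx : x ≠ 0) : ∃ m : ℤ, m • x = q := by
  have h : zmultiples x ≠ ⊥ := by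
    intro h
    exact hx (by simpa [h] using mem_zmultiples x)
  exact mem_zmultiples_iff.mp (hmin _ h)

private lemma aux_finOrder (hq : q ≠ 0) (hmin : ∀ S : AddSubgroup Q, S ≠ ⊥ → q ∈ S)
    {x : Q} (hx : x ≠ 0) : addOrderOf x ≠ 0 := by
  intro h0
  have hinj : ∀ m : ℤ, m • x = 0 → m = 0 := by
    intro m hm
    have hdvd := addOrderOf_dvd_iff_zsmul_eq_zero.mpr hm
    rw [h0] at hdvd
    exact_mod_cast zero_dvd_iff.mp (by exact_mod_cast hdvd)
  obtain ⟨c, hc⟩ := aux_mem hmin hx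
  have hcne : c ≠ 0 := by
    rintro rfl
    rw [zero_smul] at hc
    exact hq hc.symm
  have h2 : (2 * c) • x ≠ 0 := by
    intro h
    have := hinj _ h
    omega
  obtain ⟨d, hd⟩ := aux_mem hmin h2
  have h3 : (d * (2 * c) - c) • x = 0 := by
    rw [sub_smul, mul_smul, hd, hc, sub_self]
  have h4 := hinj _ h3
  have h5 : c * (2 * d - 1) = 0 := by linear_combination h4
  rcases mul_eq_zero.mp h5 with h | h
  · exact hcne h
  · omega

private lemma aux_dvd_of_mem (hq : q ≠ 0) (hmin : ∀ S : AddSubgroup Q, S ≠ ⊥ → q ∈ S)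
    {y : Q} (hy : y ≠ 0) : addOrderOf q ∣ addOrderOf y := by
  obtain ⟨m, hm⟩ := aux_mem hmin hy
  have : (addOrderOf y) • q = 0 := by
    rw [← hm, smul_comm, addOrderOf_nsmul_eq_zero, smul_zero]
  exact addOrderOf_dvd_of_nsmul_eq_zero this

private lemma aux_prime_aux (hq : q ≠ 0) (hmin : ∀ S : AddSubgroup Q, S ≠ ⊥ → q ∈ S)
    {x : Q} (hx : x ≠ 0) {d : ℕ} (hd : d.Prime) (hdvd : d ∣ addOrderOf x) :
    addOrderOf q ∣ d := by
  set n := addOrderOf x with hn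
  have hn0 : n ≠ 0 := aux_finOrder hq hmin hx
  set y := (n / d) • x with hy
  have hdy : d • y = 0 := by
    rw [hy, ← mul_smul, Nat.mul_div_cancel' hdvd, addOrderOf_nsmul_eq_zero]
  have hyne : y ≠ 0 := by
    intro h
    have h1 : n ∣ n / d := addOrderOf_dvd_of_nsmul_eq_zero (by rw [← hy, h])
    have h2 : n / d < n := Nat.div_lt_self (Nat.pos_of_ne_zero hn0) hd.one_lt
    have h3 : 0 < n / d :=
      Nat.div_pos (Nat.le_of_dvd (Nat.pos_of_ne_zero hn0) hdvd) hd.pos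
    exact absurd (Nat.le_of_dvd h3 h1) (not_le.mpr h2)
  calc addOrderOf q ∣ addOrderOf y := aux_dvd_of_mem hq hmin hyne
    _ ∣ d := addOrderOf_dvd_of_nsmul_eq_zero hdy

private lemma aux_prime (hq : q ≠ 0) (hmin : ∀ S : AddSubgroup Q, S ≠ ⊥ → q ∈ S) :
    (addOrderOf q).Prime := by
  set n := addOrderOf q with hn
  have hn0 : n ≠ 0 := aux_finOrder hq hmin hq
  have hn1 : n ≠ 1 := by
    intro h
    rw [hn] at h
    exact hq (AddMonoid.addOrderOf_eq_one_iff.mp h)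
  have hmf : n.minFac.Prime := Nat.minFac_prime hn1
  have h1 : n ∣ n.minFac := aux_prime_aux hq hmin hq hmf (Nat.minFac_dvd n)
  rcases (Nat.Prime.eq_one_or_self_of_dvd hmf n h1) with h | h
  · exact absurd h hn1
  · rwa [h]

private lemma aux_pow (hq : q ≠ 0) (hmin : ∀ S : AddSubgroup Q, S ≠ ⊥ → q ∈ S)
    (x : Q) : ∃ j : ℕ, addOrderOf x = addOrderOf q ^ j := by
  by_cases hx : x = 0
  · exact ⟨0, by simp [hx]⟩
  · have hn0 : addOrderOf x ≠ 0 := aux_finOrder hq hmin hx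
    refine ⟨_, Nat.eq_prime_pow_of_unique_prime_dvd hn0 ?_⟩
    intro d hdp hdvd
    have h1 : addOrderOf q ∣ d := aux_prime_aux hq hmin hx hdp hdvd
    exact ((Nat.Prime.eq_one_or_self_of_dvd hdp _ h1).resolve_left
      (aux_prime hq hmin).ne_one).symm

private lemma aux_tor1 (hq : q ≠ 0) (hmin : ∀ S : AddSubgroup Q, S ≠ ⊥ → q ∈ S)
    {a : Q} (ha : addOrderOf q • a = 0) : a ∈ zmultiples q := by
  by_cases ha0 : a = 0
  · rw [ha0]; exact zero_mem _
  have hpp : (addOrderOf q).Prime := aux_prime hq hmin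
  obtain ⟨m, hm⟩ := aux_mem hmin ha0
  have hnd : ¬ ((addOrderOf q : ℤ) ∣ m) := by
    rintro ⟨c, rfl⟩
    rw [mul_comm, mul_smul, natCast_zsmul, ha, smul_zero] at hm
    exact hq hm.symm
  have hgcd : IsCoprime (m : ℤ) ((addOrderOf q : ℕ) : ℤ) := by
    rw [Int.isCoprime_iff_gcd_eq_one]
    have h1 : Int.gcd m (addOrderOf q) ∣ addOrderOf q :=
      Int.natCast_dvd_natCast.mp (Int.gcd_dvd_right _ _)
    rcases hpp.eq_one_or_self_of_dvd _ h1 with h | h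
    · exact h
    · exfalso
      apply hnd
      have := Int.gcd_dvd_left (a := m) (b := (addOrderOf q : ℤ))
      rwa [h] at this
  obtain ⟨u, v, huv⟩ := hgcd
  refine mem_zmultiples_iff.mpr ⟨u, ?_⟩
  have h2 : (u * m + v * (addOrderOf q : ℤ)) • a = u • q := by
    rw [add_smul, mul_smul, mul_smul, hm, natCast_zsmul, ha, smul_zero, add_zero]
  rw [← h2, huv, one_smul]

private lemma aux_ord_eq {p : ℕ} (hpp : p.Prime) {b : Q} {k : ℕ}
    (h1 : (p ^ (k+1)) • b = 0) (h2 : (p ^ k) • b ≠ 0) : addOrderOf b = p ^ (k+1) := by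
  have hd := addOrderOf_dvd_of_nsmul_eq_zero h1
  obtain ⟨j, hjk, hj⟩ := (Nat.dvd_prime_pow hpp).mp hd
  rcases Nat.lt_or_ge j (k+1) with hlt | hge
  · exfalso
    exact h2 (addOrderOf_dvd_iff_nsmul_eq_zero.mp (by rw [hj]; exact pow_dvd_pow p (by omega)))
  · rw [hj]
    congr 1
    omega

private lemma aux_ord_psmul {p : ℕ} (hpp : p.Prime) {x : Q} {k : ℕ}
    (hx : addOrderOf x = p ^ (k+1)) : addOrderOf (p • x) = p ^ k := by
  have h1 : (p ^ k) • (p • x) = 0 := by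
    rw [smul_smul, ← pow_succ, ← hx, addOrderOf_nsmul_eq_zero]
  have h2 := addOrderOf_dvd_of_nsmul_eq_zero h1
  obtain ⟨j, hjk, hj⟩ := (Nat.dvd_prime_pow hpp).mp h2
  rcases Nat.lt_or_ge j k with hlt | hge
  · exfalso
    have h3 : (p ^ (j + 1)) • x = 0 := by
      rw [pow_succ, ← smul_smul, ← hj]
      exact addOrderOf_nsmul_eq_zero _
    have h4 : p ^ (k + 1) ∣ p ^ (j + 1) := by
      rw [← hx]; exact addOrderOf_dvd_of_nsmul_eq_zero h3
    have h5 := (Nat.pow_dvd_pow_iff_le_right hpp.one_lt).mp h4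
    omega
  · rw [hj]
    congr 1
    omega

private lemma aux_main (hq : q ≠ 0) (hmin : ∀ S : AddSubgroup Q, S ≠ ⊥ → q ∈ S) :
    ∀ k : ℕ, ∀ x : Q, addOrderOf x = addOrderOf q ^ k →
      ∀ a : Q, (addOrderOf q ^ k) • a = 0 → a ∈ zmultiples x := by
  intro k
  induction k with
  | zero =>
    intro x hx a ha
    rw [pow_zero, one_nsmul] at ha
    rw [ha]; exact zero_mem _
  | succ k ih =>
    intro x hx a ha
    have hpp : (addOrderOf q).Prime := aux_prime hq hmin
    set p := addOrderOf q with hp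
    have hpx : addOrderOf (p • x) = p ^ k := aux_ord_psmul hpp hx
    have hpa : (p ^ k) • (p • a) = 0 := by
      rw [smul_smul, ← pow_succ]; exact ha
    obtain ⟨m, hm⟩ := mem_zmultiples_iff.mp (ih (p • x) hpx (p • a) hpa)
    have hsub : p • (a - m • x) = 0 := by
      rw [smul_sub, ← hm, smul_comm p m x]
      exact sub_self _
    have hmemq : a - m • x ∈ zmultiples q := aux_tor1 hq hmin hsub
    obtain ⟨u, hu⟩ := mem_zmultiples_iff.mp hmemq
    have hxne : x ≠ 0 := by
      intro h
      apply hpp.one_lt.ne'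
      have h1 : p ∣ addOrderOf x := by
        rw [hx]; exact dvd_pow_self p (Nat.succ_ne_zero k)
      rwa [h, addOrderOf_zero, Nat.dvd_one] at h1
    obtain ⟨w, hw⟩ := aux_mem hmin hxne
    refine mem_zmultiples_iff.mpr ⟨m + u * w, ?_⟩
    rw [add_smul, mul_smul, hw, hu]
    abel

private lemma aux_step (hq : q ≠ 0) (hmin : ∀ S : AddSubgroup Q, S ≠ ⊥ → q ∈ S)
    (hbd : ∀ k : ℕ, ∃ a : Q, ¬ (addOrderOf q ^ k) • a = 0) (k : ℕ) (y : Q) :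
    ∃ z : Q, addOrderOf y = addOrderOf q ^ k →
      addOrderOf z = addOrderOf q ^ (k+1) ∧ addOrderOf q • z = y := by
  have hpp := aux_prime hq hmin
  by_cases hy : addOrderOf y = addOrderOf q ^ k
  case neg => exact ⟨0, fun h => absurd h hy⟩
  case pos =>
  set p := addOrderOf q with hp
  obtain ⟨a, ha⟩ := hbd (k+1)
  obtain ⟨m, hma⟩ := aux_pow hq hmin a
  have hm2 : k + 2 ≤ m := by
    by_contra h
    apply ha
    apply addOrderOf_dvd_iff_nsmul_eq_zero.mp
    rw [hma]
    exact pow_dvd_pow p (by omega)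
  set b := (p ^ (m - (k+1))) • a with hb
  have hb1 : (p ^ (k+1)) • b = 0 := by
    rw [hb, smul_smul, ← pow_add]
    have hh : (k+1) + (m - (k+1)) = m := by omega
    rw [hh, ← hma, addOrderOf_nsmul_eq_zero]
  have hb2 : (p ^ k) • b ≠ 0 := by
    rw [hb, smul_smul, ← pow_add]
    intro h
    have hdd : p ^ m ∣ p ^ (k + (m - (k+1))) := by
      rw [← hma]; exact addOrderOf_dvd_of_nsmul_eq_zero h
    have := (Nat.pow_dvd_pow_iff_le_right hpp.one_lt).mp hdd
    omega
  have hob : addOrderOf b = p ^ (k+1) := aux_ord_eq hpp hb1 hb2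
  rcases Nat.eq_zero_or_pos k with rfl | hkpos
  · refine ⟨b, fun _ => ⟨hob, ?_⟩⟩
    have hy0 : y = 0 := by
      rw [pow_zero] at hy
      exact AddMonoid.addOrderOf_eq_one_iff.mp hy
    have hpb : p • b = 0 := by
      have := addOrderOf_nsmul_eq_zero b
      rwa [hob, pow_one] at this
    rw [hy0]
    exact hpb
  · have hopb : addOrderOf (p • b) = p ^ k := aux_ord_psmul hpp hob
    have hmem := aux_main hq hmin k (p • b) hopb y
      (by rw [← hy]; exact addOrderOf_nsmul_eq_zero y)
    obtain ⟨m', hm'⟩ := mem_zmultiples_iff.mp hmem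
    refine ⟨m' • b, fun _ => ⟨?_, ?_⟩⟩
    · apply aux_ord_eq hpp
      · rw [smul_comm, hb1, smul_zero]
      · intro h0
        have h1 : (p ^ (k-1)) • y = 0 := by
          rw [← hm', smul_comm, smul_smul, ← pow_succ]
          have hk1 : k - 1 + 1 = k := by omega
          rw [hk1, smul_comm]
          exact h0
        have h2 : p ^ k ∣ p ^ (k-1) := by
          rw [← hy]; exact addOrderOf_dvd_of_nsmul_eq_zero h1
        have := (Nat.pow_dvd_pow_iff_le_right hpp.one_lt).mp h2
        omega
    · rw [smul_comm]
      exact hm'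

end aux

/-- If `Q` is an abelian group with a non-zero element `q` contained in every non-trivial
subgroup, then `Q` is either cyclic of prime-power order or isomorphic to a Prüfer
`p`-group for some prime `p`. -/
theorem cyclic_or_prufer_of_min_element {Q : Type*} [AddCommGroup Q]
    (q : Q) (hq : q ≠ 0) (hmin : ∀ S : AddSubgroup Q, S ≠ ⊥ → q ∈ S) :
    (∃ p k : ℕ, p.Prime ∧ Nonempty (Q ≃+ ZMod (p ^ k))) ∨
    (∃ p : ℕ, p.Prime ∧ Nonempty (Q ≃+ pruferGroup p)) := by
  classical
  have hpp : (addOrderOf q).Prime := aux_prime hq hmin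
  set p := addOrderOf q with hp
  by_cases hbd : ∃ k : ℕ, ∀ a : Q, (p ^ k) • a = 0
  · -- cyclic case
    left
    refine ⟨p, ?_⟩
    let k := Nat.find hbd
    have hk : ∀ a : Q, (p ^ k) • a = 0 := Nat.find_spec hbd
    have hk0 : k ≠ 0 := by
      intro h
      have h1 := hk q
      rw [h, pow_zero, one_nsmul] at h1
      exact hq h1
    obtain ⟨x, hx⟩ : ∃ x : Q, ¬ (p ^ (k-1)) • x = 0 := by
      have h1 := Nat.find_min hbd (m := k - 1) (by omega)
      push_neg at h1
      exact h1
    have hox : addOrderOf x = p ^ k := by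
      obtain ⟨j, hj⟩ := aux_pow hq hmin x
      have hdvd : addOrderOf x ∣ p ^ k := addOrderOf_dvd_of_nsmul_eq_zero (hk x)
      rw [hj] at hdvd
      have hjk : j ≤ k := (Nat.pow_dvd_pow_iff_le_right hpp.one_lt).mp hdvd
      rcases Nat.lt_or_ge j k with hlt | hge
      · exfalso
        apply hx
        apply addOrderOf_dvd_iff_nsmul_eq_zero.mp
        rw [hj]
        exact pow_dvd_pow p (by omega)
      · rw [hj]
        congr 1
        omega
    refine ⟨k, hpp, ?_⟩
    have hfull : ∀ a : Q, a ∈ AddSubgroup.zmultiples x :=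
      fun a => aux_main hq hmin k x hox a (hk a)
    have hsmulpk : (zmultiplesHom Q x) ((p ^ k : ℕ) : ℤ) = 0 := by
      show ((p ^ k : ℕ) : ℤ) • x = 0
      rw [natCast_zsmul]
      exact hk x
    let φ : ZMod (p ^ k) →+ Q := ZMod.lift (p ^ k) ⟨zmultiplesHom Q x, hsmulpk⟩
    have hinj : Function.Injective φ := by
      rw [ZMod.lift_injective]
      intro m hm
      rw [ZMod.intCast_zmod_eq_zero_iff_dvd]
      have h1 : (addOrderOf x : ℤ) ∣ m := addOrderOf_dvd_iff_zsmul_eq_zero.mpr hm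
      rw [hox] at h1
      exact_mod_cast h1
    have hsurj : Function.Surjective φ := by
      intro a
      obtain ⟨m, hm⟩ := AddSubgroup.mem_zmultiples_iff.mp (hfull a)
      exact ⟨(m : ZMod (p ^ k)), by rw [ZMod.lift_coe]; exact hm⟩
    exact ⟨(AddEquiv.ofBijective φ ⟨hinj, hsurj⟩).symm⟩
  · -- Prüfer case
    right
    refine ⟨p, hpp, ?_⟩
    push_neg at hbd
    have hbd' : ∀ k : ℕ, ∃ a : Q, ¬ (p ^ k) • a = 0 := hbd
    have hstep : ∀ (k : ℕ) (y : Q), ∃ z : Q,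
        addOrderOf y = p ^ k → addOrderOf z = p ^ (k+1) ∧ p • z = y :=
      aux_step hq hmin hbd'
    let ch : ℕ → Q := fun k =>
      Nat.rec (motive := fun _ => Q) 0 (fun k xk => Classical.choose (hstep k xk)) k
    have chS : ∀ k, ch (k+1) = Classical.choose (hstep k (ch k)) := fun k => rfl
    have hord : ∀ k, addOrderOf (ch k) = p ^ k := by
      intro k
      induction k with
      | zero => simp [ch]
      | succ k ih =>
        rw [chS]
        exact (Classical.choose_spec (hstep k (ch k)) ih).1
    have hcomp : ∀ k, p • ch (k+1) = ch k := by
      intro k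
      rw [chS]
      exact (Classical.choose_spec (hstep k (ch k)) (hord k)).2
    have chpow : ∀ (d j : ℕ), (p ^ d : ℕ) • ch (j + d) = ch j := by
      intro d
      induction d with
      | zero => intro j; rw [pow_zero, one_nsmul, Nat.add_zero]
      | succ d ih =>
        intro j
        rw [pow_succ, mul_comm, mul_nsmul]
        have : ch (j + (d+1)) = ch ((j + d) + 1) := by ring_nf
        rw [this, hcomp (j + d)]
        exact ih j
    have xipow : ∀ (d j : ℕ), (p ^ d : ℕ) • pXi p (j + d) = pXi p j := by
      intro d
      induction d with
      | zero => intro j; rw [pow_zero, one_nsmul, Nat.add_zero]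
      | succ d ih =>
        intro j
        rw [pow_succ, mul_comm, mul_nsmul]
        have : pXi p (j + (d+1)) = pXi p ((j + d) + 1) := by ring_nf
        rw [this, circ_compat hpp.pos (j + d)]
        exact ih j
    -- gluing lemma
    have glue : ∀ (j k : ℕ) (m m' : ℤ), j ≤ k → m • ch j = m' • ch k →
        m • pXi p j = m' • pXi p k := by
      intro j k m m' hjk hmm
      obtain ⟨d, rfl⟩ := Nat.exists_eq_add_of_le hjk
      rw [← chpow d j, ← natCast_zsmul, smul_smul] at hmm
      have hdvd : ((p ^ (j + d) : ℕ) : ℤ) ∣ (m * (p ^ d : ℕ) - m') := by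
        have h1 : (m * (p ^ d : ℕ) - m') • ch (j + d) = 0 := by
          rw [sub_smul, hmm, sub_self]
        have h2 := addOrderOf_dvd_iff_zsmul_eq_zero.mpr h1
        rwa [hord (j + d)] at h2
      obtain ⟨e, he⟩ := hdvd
      have h3 : (m * (p ^ d : ℕ) - m') • pXi p (j + d) = 0 := by
        rw [he, mul_comm, mul_smul, natCast_zsmul, circ_tor hpp.pos, smul_zero]
      have h4 : (m * (p ^ d : ℕ)) • pXi p (j + d) = m' • pXi p (j + d) := by
        have h5 : (m * (p ^ d : ℕ)) • pXi p (j + d) - m' • pXi p (j + d) = 0 := by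
          rw [← sub_smul]; exact h3
        exact sub_eq_zero.mp h5
      rw [← xipow d j, ← natCast_zsmul, smul_smul]
      exact h4
    -- index and coefficient
    have hidx : ∀ x : Q, ∃ jm : ℕ × ℤ, jm.2 • ch jm.1 = x := by
      intro x
      obtain ⟨j, hj⟩ := aux_pow hq hmin x
      have hmem : x ∈ AddSubgroup.zmultiples (ch j) :=
        aux_main hq hmin j (ch j) (hord j) x (by rw [← hj]; exact addOrderOf_nsmul_eq_zero x)
      obtain ⟨m, hm⟩ := AddSubgroup.mem_zmultiples_iff.mp hmem
      exact ⟨(j, m), hm⟩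
    let J : Q → ℕ := fun x => (Classical.choose (hidx x)).1
    let C : Q → ℤ := fun x => (Classical.choose (hidx x)).2
    have hJC : ∀ x, C x • ch (J x) = x := fun x => Classical.choose_spec (hidx x)
    let f : Q → AddCircle (1:ℝ) := fun x => C x • pXi p (J x)
    have hf : ∀ (k : ℕ) (m : ℤ) (x : Q), m • ch k = x → f x = m • pXi p k := by
      intro k m x hm
      rcases le_total (J x) k with h | h
      · exact glue (J x) k (C x) m h (by rw [hJC x, hm])
      · exact (glue k (J x) m (C x) h (by rw [hJC x, hm])).symm
    have hlift : ∀ (j k : ℕ) (m : ℤ) (x : Q), j ≤ k → m • ch j = x →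
        (m * (p:ℤ) ^ (k - j)) • ch k = x := by
      intro j k m x hjk hm
      obtain ⟨d, rfl⟩ := Nat.exists_eq_add_of_le hjk
      rw [Nat.add_sub_cancel_left]
      rw [mul_smul, ← hm]
      congr 1
      have hcast : ((p:ℤ))^d = ((p^d : ℕ) : ℤ) := by push_cast; ring
      rw [hcast, natCast_zsmul]
      exact chpow d j
    have hadd : ∀ x y : Q, f (x + y) = f x + f y := by
      intro x y
      set k := max (J x) (J y) with hk
      have hx2 : (C x * (p:ℤ) ^ (k - J x)) • ch k = x :=
        hlift (J x) k (C x) x (le_max_left _ _) (hJC x)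
      have hy2 : (C y * (p:ℤ) ^ (k - J y)) • ch k = y :=
        hlift (J y) k (C y) y (le_max_right _ _) (hJC y)
      have hxy : (C x * (p:ℤ) ^ (k - J x) + C y * (p:ℤ) ^ (k - J y)) • ch k = x + y := by
        rw [add_smul, hx2, hy2]
      rw [hf k _ _ hxy, hf k _ _ hx2, hf k _ _ hy2, add_smul]
    let F : Q →+ AddCircle (1:ℝ) := AddMonoidHom.mk' f hadd
    have hmemP : ∀ x : Q, F x ∈ pruferGroup p := by
      intro x
      refine ⟨J x, ?_⟩
      show (p ^ (J x) : ℕ) • (C x • pXi p (J x)) = 0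
      rw [smul_comm, circ_tor hpp.pos, smul_zero]
    let F' : Q →+ pruferGroup p := F.codRestrict _ hmemP
    have hker : ∀ x : Q, F' x = 0 → x = 0 := by
      intro x hx
      by_contra hx0
      have hS : F'.ker ≠ ⊥ := by
        intro h
        have hxm : x ∈ F'.ker := hx
        rw [h] at hxm
        exact hx0 hxm
      have hqk : q ∈ F'.ker := hmin _ hS
      have hfq : f q = 0 := by
        have : F' q = 0 := hqk
        exact congrArg Subtype.val this
      obtain ⟨m, hm⟩ := AddSubgroup.mem_zmultiples_iff.mp
        (aux_main hq hmin 1 (ch 1) (hord 1) q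
          (by rw [pow_one]; exact addOrderOf_nsmul_eq_zero q))
      have hfq2 : f q = m • pXi p 1 := hf 1 m q hm
      rw [hfq] at hfq2
      obtain ⟨e, he⟩ := circ_dvd hpp.pos 1 m hfq2.symm
      rw [pow_one] at he
      apply hq
      rw [← hm, he, mul_comm, mul_smul, natCast_zsmul]
      have hch0 : p • ch 1 = ch 0 := hcomp 0
      rw [hch0]
      show e • (0 : Q) = 0
      rw [smul_zero]
    have hFinj : Function.Injective F' := by
      rw [injective_iff_map_eq_zero]
      exact hker
    have hFsurj : Function.Surjective F' := by
      rintro ⟨y, k, hyk⟩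
      obtain ⟨m, hm⟩ := circ_surj hpp.pos k y hyk
      refine ⟨m • ch k, ?_⟩
      apply Subtype.ext
      show f (m • ch k) = y
      rw [hf k m _ rfl, hm]
    exact ⟨AddEquiv.ofBijective F' ⟨hFinj, hFsurj⟩⟩
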